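/- arXiv:2205.14466 — 2 statements merged into one kernel-verified Lean document; each statement's English description precedes it below -/
import Mathlib

section
/- For all integers m ≥ 2 and n ≥ 3: inspc(H^(1)_{m,n}) ≥ ⌈(m+1)/2⌉, inspc(H^(2)_{m,n}) ≥ ⌈(m+1)/2⌉, and inspc(H^(3)_{m,n}) ≥ m. -/
open SimpleGraph

/-- `G` contains an induced subgraph isomorphic to `H`. -/
def HasInducedCopy {V W : Type*} (G : SimpleGraph V) (H : SimpleGraph W) : Prop :=
  ∃ f : W ↪ V, ∀ a b : W, G.Adj (f a) (f b) ↔ H.Adj a b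

/-- The star `K_{1,m}` (one center plus `m` leaves). -/
def starGraph (m : ℕ) : SimpleGraph (Unit ⊕ Fin m) := completeBipartiteGraph Unit (Fin m)

/-- `S` induces in `G` a subgraph isomorphic to a path `P_m` on `m ≥ 1` vertices. -/
def IsInducedPathSet {V : Type*} (G : SimpleGraph V) (S : Set V) : Prop :=
  ∃ m : ℕ, 1 ≤ m ∧ Nonempty ((G.induce S) ≃g pathGraph m)

/-- `S` induces in `G` a subgraph isomorphic to a star `K_{1,m}` with `m ≥ 1`. -/
def IsInducedStarSet {V : Type*} (G : SimpleGraph V) (S : Set V) : Prop :=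
  ∃ m : ℕ, 1 ≤ m ∧ Nonempty ((G.induce S) ≃g _root_.starGraph m)

/-- `S` consists of a single vertex (i.e. induces `K_1`). -/
def IsSingletonSet {V : Type*} (S : Set V) : Prop := ∃ v, S = {v}

/-- `S` is the vertex set of an isometric (shortest) path of `G`. -/
def IsIsometricPathSet {V : Type*} (G : SimpleGraph V) (S : Set V) : Prop :=
  ∃ (u v : V) (p : G.Walk u v), p.IsPath ∧ p.length = G.dist u v ∧
    S = {x | x ∈ p.support}

/-- `P` is a family of sets, all satisfying `pred`, whose union is all of `V`. -/
def IsCoverBy {V : Type*} (P : Finset (Set V)) (pred : Set V → Prop) : Prop :=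
  (∀ S ∈ P, pred S) ∧ ∀ v : V, ∃ S ∈ P, v ∈ S

/-- `P` is a cover by sets satisfying `pred`, whose members are pairwise disjoint. -/
def IsPartitionBy {V : Type*} (P : Finset (Set V)) (pred : Set V → Prop) : Prop :=
  IsCoverBy P pred ∧ ∀ S ∈ P, ∀ T ∈ P, S ≠ T → ∀ v, v ∈ S → v ∉ T

/-- Minimum cardinality of a cover by sets satisfying `pred`. -/
noncomputable def coverNumber {V : Type*} (pred : Set V → Prop) : ℕ :=
  sInf {k | ∃ P : Finset (Set V), P.card = k ∧ IsCoverBy P pred}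

/-- Minimum cardinality of a partition into sets satisfying `pred`. -/
noncomputable def partitionNumber {V : Type*} (pred : Set V → Prop) : ℕ :=
  sInf {k | ∃ P : Finset (Set V), P.card = k ∧ IsPartitionBy P pred}

/-- The induced SP-cover number. -/
noncomputable def inspc {V : Type*} (G : SimpleGraph V) : ℕ :=
  coverNumber (fun S => IsInducedStarSet G S ∨ IsInducedPathSet G S)

/-- The induced SP-partition number. -/
noncomputable def inspp {V : Type*} (G : SimpleGraph V) : ℕ :=
  partitionNumber (fun S => IsInducedStarSet G S ∨ IsInducedPathSet G S)

/-- The induced star cover number. -/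
noncomputable def insc {V : Type*} (G : SimpleGraph V) : ℕ :=
  coverNumber (fun S => IsInducedStarSet G S ∨ IsSingletonSet S)

/-- The induced star partition number. -/
noncomputable def insp {V : Type*} (G : SimpleGraph V) : ℕ :=
  partitionNumber (fun S => IsInducedStarSet G S ∨ IsSingletonSet S)

/-- The induced path cover number. -/
noncomputable def inpc {V : Type*} (G : SimpleGraph V) : ℕ :=
  coverNumber (fun S => IsInducedPathSet G S)

/-- The induced path partition number. -/
noncomputable def inpp {V : Type*} (G : SimpleGraph V) : ℕ :=
  partitionNumber (fun S => IsInducedPathSet G S)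

/-- The isometric path cover number. -/
noncomputable def ispc {V : Type*} (G : SimpleGraph V) : ℕ :=
  coverNumber (fun S => IsIsometricPathSet G S)

/-- The isometric path partition number. -/
noncomputable def ispp {V : Type*} (G : SimpleGraph V) : ℕ :=
  partitionNumber (fun S => IsIsometricPathSet G S)

/-- `S*_n` : center `x = inl ()`, middle vertices `y i = inr (inl i)`,
leaves `z i = inr (inr i)`; edges `x yᵢ` and `yᵢ zᵢ`. -/
def SStar (n : ℕ) : SimpleGraph (Unit ⊕ Fin n ⊕ Fin n) :=
  SimpleGraph.fromRel (fun a b =>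
    (∃ i : Fin n, a = Sum.inl () ∧ b = Sum.inr (Sum.inl i)) ∨
    (∃ i : Fin n, a = Sum.inr (Sum.inl i) ∧ b = Sum.inr (Sum.inr i)))

/-- `S̃_n` : `S*_n` together with the edges `x zᵢ`. -/
def STilde (n : ℕ) : SimpleGraph (Unit ⊕ Fin n ⊕ Fin n) :=
  SimpleGraph.fromRel (fun a b =>
    (∃ i : Fin n, a = Sum.inl () ∧ b = Sum.inr (Sum.inl i)) ∨
    (∃ i : Fin n, a = Sum.inr (Sum.inl i) ∧ b = Sum.inr (Sum.inr i)) ∨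
    (∃ i : Fin n, a = Sum.inl () ∧ b = Sum.inr (Sum.inr i)))

/-- `F⁽¹⁾_n` : vertices `x₁ = inl 0`, `x₂ = inl 1`, `yᵢ = inr (inl i)`, `zᵢ = inr (inr i)`;
edges `x₁x₂`, `x₁y₁`, `x₁z₁`, and two paths `y₁⋯yₙ`, `z₁⋯zₙ`. -/
def F1 (n : ℕ) : SimpleGraph (Fin 2 ⊕ Fin n ⊕ Fin n) :=
  SimpleGraph.fromRel (fun a b =>
    (a = Sum.inl 0 ∧ b = Sum.inl 1) ∨
    (∃ j : Fin n, (j : ℕ) = 0 ∧ a = Sum.inl 0 ∧ b = Sum.inr (Sum.inl j)) ∨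
    (∃ j : Fin n, (j : ℕ) = 0 ∧ a = Sum.inl 0 ∧ b = Sum.inr (Sum.inr j)) ∨
    (∃ i j : Fin n, (i : ℕ) + 1 = (j : ℕ) ∧ a = Sum.inr (Sum.inl i) ∧ b = Sum.inr (Sum.inl j)) ∨
    (∃ i j : Fin n, (i : ℕ) + 1 = (j : ℕ) ∧ a = Sum.inr (Sum.inr i) ∧ b = Sum.inr (Sum.inr j)))

/-- `F⁽²⁾_n` : vertex `x₁ = inl ()`, `yᵢ = inr (inl i)`, `zᵢ = inr (inr i)`;
edges `x₁y₁`, `x₁z₁`, `y₁z₁`, and two paths `y₁⋯yₙ`, `z₁⋯zₙ`. -/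
def F2 (n : ℕ) : SimpleGraph (Unit ⊕ Fin n ⊕ Fin n) :=
  SimpleGraph.fromRel (fun a b =>
    (∃ j : Fin n, (j : ℕ) = 0 ∧ a = Sum.inl () ∧ b = Sum.inr (Sum.inl j)) ∨
    (∃ j : Fin n, (j : ℕ) = 0 ∧ a = Sum.inl () ∧ b = Sum.inr (Sum.inr j)) ∨
    (∃ i j : Fin n, (i : ℕ) = 0 ∧ (j : ℕ) = 0 ∧ a = Sum.inr (Sum.inl i) ∧ b = Sum.inr (Sum.inr j)) ∨
    (∃ i j : Fin n, (i : ℕ) + 1 = (j : ℕ) ∧ a = Sum.inr (Sum.inl i) ∧ b = Sum.inr (Sum.inl j)) ∨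
    (∃ i j : Fin n, (i : ℕ) + 1 = (j : ℕ) ∧ a = Sum.inr (Sum.inr i) ∧ b = Sum.inr (Sum.inr j)))

/-- `F⁽³⁾_n` : vertices `xᵢ = inl i`, `yᵢ = inr (inl i)`, `zᵢ = inr (inr i)`;
edges `xᵢy₁`, `xᵢz₁` for all `i`, and two paths `y₁⋯yₙ`, `z₁⋯zₙ`. -/
def F3 (n : ℕ) : SimpleGraph (Fin n ⊕ Fin n ⊕ Fin n) :=
  SimpleGraph.fromRel (fun a b =>
    (∃ (i j : Fin n), (j : ℕ) = 0 ∧ a = Sum.inl i ∧ b = Sum.inr (Sum.inl j)) ∨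
    (∃ (i j : Fin n), (j : ℕ) = 0 ∧ a = Sum.inl i ∧ b = Sum.inr (Sum.inr j)) ∨
    (∃ i j : Fin n, (i : ℕ) + 1 = (j : ℕ) ∧ a = Sum.inr (Sum.inl i) ∧ b = Sum.inr (Sum.inl j)) ∨
    (∃ i j : Fin n, (i : ℕ) + 1 = (j : ℕ) ∧ a = Sum.inr (Sum.inr i) ∧ b = Sum.inr (Sum.inr j)))

/-- `F⁽⁴⁾_n` : `F⁽³⁾_n` with only `x₁, x₂` kept (no edge `x₁x₂`). -/
def F4 (n : ℕ) : SimpleGraph (Fin 2 ⊕ Fin n ⊕ Fin n) :=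
  SimpleGraph.fromRel (fun a b =>
    (∃ (i : Fin 2) (j : Fin n), (j : ℕ) = 0 ∧ a = Sum.inl i ∧ b = Sum.inr (Sum.inl j)) ∨
    (∃ (i : Fin 2) (j : Fin n), (j : ℕ) = 0 ∧ a = Sum.inl i ∧ b = Sum.inr (Sum.inr j)) ∨
    (∃ i j : Fin n, (i : ℕ) + 1 = (j : ℕ) ∧ a = Sum.inr (Sum.inl i) ∧ b = Sum.inr (Sum.inl j)) ∨
    (∃ i j : Fin n, (i : ℕ) + 1 = (j : ℕ) ∧ a = Sum.inr (Sum.inr i) ∧ b = Sum.inr (Sum.inr j)))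

/-- `F⁽⁵⁾_n` : `F⁽⁴⁾_n` plus the edge `x₁x₂`. -/
def F5 (n : ℕ) : SimpleGraph (Fin 2 ⊕ Fin n ⊕ Fin n) :=
  SimpleGraph.fromRel (fun a b =>
    (a = Sum.inl 0 ∧ b = Sum.inl 1) ∨
    (∃ (i : Fin 2) (j : Fin n), (j : ℕ) = 0 ∧ a = Sum.inl i ∧ b = Sum.inr (Sum.inl j)) ∨
    (∃ (i : Fin 2) (j : Fin n), (j : ℕ) = 0 ∧ a = Sum.inl i ∧ b = Sum.inr (Sum.inr j)) ∨
    (∃ i j : Fin n, (i : ℕ) + 1 = (j : ℕ) ∧ a = Sum.inr (Sum.inl i) ∧ b = Sum.inr (Sum.inl j)) ∨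
    (∃ i j : Fin n, (i : ℕ) + 1 = (j : ℕ) ∧ a = Sum.inr (Sum.inr i) ∧ b = Sum.inr (Sum.inr j)))

/-- The Ramsey number `R(a,b)` : least `R` such that every simple graph on at least `R`
vertices contains a clique of size `a` or an independent set of size `b`. -/
noncomputable def ramseyNumber (a b : ℕ) : ℕ :=
  sInf {R : ℕ | ∀ (m : ℕ) (G : SimpleGraph (Fin m)), R ≤ m →
    (∃ s : Finset (Fin m), s.card = a ∧ ∀ u ∈ s, ∀ v ∈ s, u ≠ v → G.Adj u v) ∨
    (∃ s : Finset (Fin m), s.card = b ∧ ∀ u ∈ s, ∀ v ∈ s, u ≠ v → ¬ G.Adj u v)}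

/-- `ξ_{n,i} = ((R(n-1,n)-1)^i - 1)/(R(n-1,n)-2)`. -/
noncomputable def xi (n i : ℕ) : ℕ :=
  ((ramseyNumber (n - 1) n - 1) ^ i - 1) / (ramseyNumber (n - 1) n - 2)
/-- `H⁽¹⁾_{m,n}` : `m` disjoint paths `u i 1 ⋯ u i n` (`u i j = inl (i,j)`), plus vertices
`v i = inr (inl i)`, `w i = inr (inr i)` and edges `vᵢwᵢ`, `vᵢ uᵢⁿ`, `vᵢ uᵢ₊₁¹`. -/
def H1 (m n : ℕ) : SimpleGraph ((Fin m × Fin n) ⊕ (Fin (m - 1) ⊕ Fin (m - 1))) :=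
  SimpleGraph.fromRel (fun a b =>
    (∃ (i : Fin m) (j j' : Fin n), (j : ℕ) + 1 = (j' : ℕ) ∧
      a = Sum.inl (i, j) ∧ b = Sum.inl (i, j')) ∨
    (∃ i : Fin (m - 1), a = Sum.inr (Sum.inl i) ∧ b = Sum.inr (Sum.inr i)) ∨
    (∃ (i : Fin (m - 1)) (p : Fin m) (q : Fin n), (p : ℕ) = (i : ℕ) ∧ (q : ℕ) = n - 1 ∧
      a = Sum.inr (Sum.inl i) ∧ b = Sum.inl (p, q)) ∨
    (∃ (i : Fin (m - 1)) (p : Fin m) (q : Fin n), (p : ℕ) = (i : ℕ) + 1 ∧ (q : ℕ) = 0 ∧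
      a = Sum.inr (Sum.inl i) ∧ b = Sum.inl (p, q)))

/-- `H⁽²⁾_{m,n}` : `m` disjoint paths plus vertices `vᵢ = inr i` and edges
`vᵢ uᵢⁿ`, `vᵢ uᵢ₊₁¹`, `uᵢⁿ uᵢ₊₁¹`. -/
def H2 (m n : ℕ) : SimpleGraph ((Fin m × Fin n) ⊕ Fin (m - 1)) :=
  SimpleGraph.fromRel (fun a b =>
    (∃ (i : Fin m) (j j' : Fin n), (j : ℕ) + 1 = (j' : ℕ) ∧
      a = Sum.inl (i, j) ∧ b = Sum.inl (i, j')) ∨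
    (∃ (i : Fin (m - 1)) (p : Fin m) (q : Fin n), (p : ℕ) = (i : ℕ) ∧ (q : ℕ) = n - 1 ∧
      a = Sum.inr i ∧ b = Sum.inl (p, q)) ∨
    (∃ (i : Fin (m - 1)) (p : Fin m) (q : Fin n), (p : ℕ) = (i : ℕ) + 1 ∧ (q : ℕ) = 0 ∧
      a = Sum.inr i ∧ b = Sum.inl (p, q)) ∨
    (∃ (p p' : Fin m) (q q' : Fin n), (p : ℕ) + 1 = (p' : ℕ) ∧ (q : ℕ) = n - 1 ∧ (q' : ℕ) = 0 ∧
      a = Sum.inl (p, q) ∧ b = Sum.inl (p', q')))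

/-- `H⁽³⁾_{m,n}` : `m` disjoint paths plus vertices `v i t = inr (i, t)` (`t : Fin m`)
and edges `v i t uᵢⁿ`, `v i t uᵢ₊₁¹`. -/
def H3 (m n : ℕ) : SimpleGraph ((Fin m × Fin n) ⊕ (Fin (m - 1) × Fin m)) :=
  SimpleGraph.fromRel (fun a b =>
    (∃ (i : Fin m) (j j' : Fin n), (j : ℕ) + 1 = (j' : ℕ) ∧
      a = Sum.inl (i, j) ∧ b = Sum.inl (i, j')) ∨
    (∃ (i : Fin (m - 1)) (t : Fin m) (p : Fin m) (q : Fin n),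
      (p : ℕ) = (i : ℕ) ∧ (q : ℕ) = n - 1 ∧ a = Sum.inr (i, t) ∧ b = Sum.inl (p, q)) ∨
    (∃ (i : Fin (m - 1)) (t : Fin m) (p : Fin m) (q : Fin n),
      (p : ℕ) = (i : ℕ) + 1 ∧ (q : ℕ) = 0 ∧ a = Sum.inr (i, t) ∧ b = Sum.inl (p, q)))

/-- `H⁽⁴⁾_{m,n}` : `m` disjoint paths plus vertices `v i t = inr (i, t)` (`t : Fin 2`)
and edges `v i t uᵢⁿ`, `v i t uᵢ₊₁¹`. -/
def H4 (m n : ℕ) : SimpleGraph ((Fin m × Fin n) ⊕ (Fin (m - 1) × Fin 2)) :=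
  SimpleGraph.fromRel (fun a b =>
    (∃ (i : Fin m) (j j' : Fin n), (j : ℕ) + 1 = (j' : ℕ) ∧
      a = Sum.inl (i, j) ∧ b = Sum.inl (i, j')) ∨
    (∃ (i : Fin (m - 1)) (t : Fin 2) (p : Fin m) (q : Fin n),
      (p : ℕ) = (i : ℕ) ∧ (q : ℕ) = n - 1 ∧ a = Sum.inr (i, t) ∧ b = Sum.inl (p, q)) ∨
    (∃ (i : Fin (m - 1)) (t : Fin 2) (p : Fin m) (q : Fin n),
      (p : ℕ) = (i : ℕ) + 1 ∧ (q : ℕ) = 0 ∧ a = Sum.inr (i, t) ∧ b = Sum.inl (p, q)))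

/-- `H⁽⁵⁾_{m,n}` : `H⁽⁴⁾_{m,n}` plus the edges `v i 1 ~ v i 2`. -/
def H5 (m n : ℕ) : SimpleGraph ((Fin m × Fin n) ⊕ (Fin (m - 1) × Fin 2)) :=
  SimpleGraph.fromRel (fun a b =>
    (∃ (i : Fin m) (j j' : Fin n), (j : ℕ) + 1 = (j' : ℕ) ∧
      a = Sum.inl (i, j) ∧ b = Sum.inl (i, j')) ∨
    (∃ (i : Fin (m - 1)) (t : Fin 2) (p : Fin m) (q : Fin n),
      (p : ℕ) = (i : ℕ) ∧ (q : ℕ) = n - 1 ∧ a = Sum.inr (i, t) ∧ b = Sum.inl (p, q)) ∨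
    (∃ (i : Fin (m - 1)) (t : Fin 2) (p : Fin m) (q : Fin n),
      (p : ℕ) = (i : ℕ) + 1 ∧ (q : ℕ) = 0 ∧ a = Sum.inr (i, t) ∧ b = Sum.inl (p, q)) ∨
    (∃ i : Fin (m - 1), a = Sum.inr (i, 0) ∧ b = Sum.inr (i, 1)))

section Generic

variable {V : Type*} {G : SimpleGraph V} {S : Set V}

/-- Transfer adjacency through a graph isomorphism of an induced subgraph. -/
lemma induce_iso_adj {W : Type*} {H : SimpleGraph W} (e : G.induce S ≃g H)
    (x y : S) : G.Adj x y ↔ H.Adj (e x) (e y) := by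
  rw [e.map_rel_iff]; simp

lemma induce_iso_inj {W : Type*} {H : SimpleGraph W} (e : G.induce S ≃g H)
    {x y : S} (h : e x = e y) : x = y := e.toEquiv.injective h

/-- Every induced star set has a "center" dominating the set. -/
lemma star_center (h : IsInducedStarSet G S) :
    ∃ c ∈ S, ∀ y, y ∈ S → y = c ∨ G.Adj c y := by
  obtain ⟨m, _, ⟨e⟩⟩ := h
  refine ⟨(e.symm (Sum.inl ())).1, (e.symm (Sum.inl ())).2, fun y hy => ?_⟩
  by_cases hc : e ⟨y, hy⟩ = Sum.inl ()
  · left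
    have : (⟨y, hy⟩ : S) = e.symm (Sum.inl ()) := by
      rw [← hc, RelIso.symm_apply_apply]
    exact congrArg Subtype.val this
  · right
    rw [induce_iso_adj e (e.symm (Sum.inl ())) ⟨y, hy⟩, RelIso.apply_symm_apply]
    rcases he : e ⟨y, hy⟩ with _ | j
    · exact absurd he hc
    · simp [_root_.starGraph]

/-- In an induced path, a vertex whose `S`-neighbourhood is not "a clique"
cannot exist; consequence: any vertex of `S` whose neighbourhood in `G` is a clique
maps to an endpoint. -/
lemma path_endpoint {r : ℕ} (e : G.induce S ≃g pathGraph r) {a : V} (ha : a ∈ S)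
    (hcl : ∀ y z, G.Adj a y → G.Adj a z → y ≠ z → G.Adj y z) :
    (e ⟨a, ha⟩).val = 0 ∨ (e ⟨a, ha⟩).val = r - 1 := by
  by_contra hcon
  push_neg at hcon
  have hlt := (e ⟨a, ha⟩).isLt
  set v := (e ⟨a, ha⟩).val with hv
  have h1 : 0 < v := Nat.pos_of_ne_zero hcon.1
  have h2 : v + 1 < r := by omega
  set y : Fin r := ⟨v - 1, by omega⟩
  set z : Fin r := ⟨v + 1, h2⟩
  have hay : G.Adj a (e.symm y) := by
    rw [induce_iso_adj e ⟨a, ha⟩ (e.symm y), RelIso.apply_symm_apply, pathGraph_adj]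
    simp [y] <;> omega
  have haz : G.Adj a (e.symm z) := by
    rw [induce_iso_adj e ⟨a, ha⟩ (e.symm z), RelIso.apply_symm_apply, pathGraph_adj]
    simp [z] <;> omega
  have hyz : ((e.symm y : S) : V) ≠ ((e.symm z : S) : V) := by
    intro hh
    have : e.symm y = e.symm z := Subtype.ext hh
    have := congrArg e this
    rw [RelIso.apply_symm_apply, RelIso.apply_symm_apply] at this
    have : (y : ℕ) = z := congrArg Fin.val this
    simp [y, z] at this <;> omega
  have := hcl _ _ hay haz hyz
  have : (pathGraph r).Adj y z := by
    have h' : G.Adj (e.symm y) (e.symm z) := this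
    rw [induce_iso_adj e (e.symm y) (e.symm z), RelIso.apply_symm_apply,
      RelIso.apply_symm_apply] at h'
    exact h'
  rw [pathGraph_adj] at this
  simp [y, z] at this <;> omega

/-- At most two vertices with clique neighbourhoods pairwise non-adjacent with no
common neighbours fit in an induced star or path. -/
lemma sp_two (h : IsInducedStarSet G S ∨ IsInducedPathSet G S)
    {a b c : V} (ha : a ∈ S) (hb : b ∈ S) (hc : c ∈ S)
    (hab : a ≠ b) (hac : a ≠ c) (hbc : b ≠ c)
    (hcl : ∀ x, (x = a ∨ x = b ∨ x = c) → ∀ y z, G.Adj x y → G.Adj x z → y ≠ z → G.Adj y z)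
    (hnadj : ∀ x y, (x = a ∨ x = b ∨ x = c) → (y = a ∨ y = b ∨ y = c) → ¬ G.Adj x y)
    (hncom : ∀ x y u, (x = a ∨ x = b ∨ x = c) → (y = a ∨ y = b ∨ y = c) → x ≠ y →
      G.Adj x u → G.Adj y u → False) : False := by
  rcases h with h | h
  · obtain ⟨c₀, hc₀S, hdom⟩ := star_center h
    -- at least two of a, b, c differ from c₀
    have key : ∀ x y, (x = a ∨ x = b ∨ x = c) → (y = a ∨ y = b ∨ y = c) → x ≠ y →
        x ∈ S → y ∈ S → x = c₀ ∨ y = c₀ := by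
      intro x y hx hy hxy hxS hyS
      rcases hdom x hxS with rfl | hax
      · exact Or.inl rfl
      rcases hdom y hyS with rfl | hay
      · exact Or.inr rfl
      exact absurd (hncom x y c₀ hx hy hxy hax.symm hay.symm) (by simp)
    rcases key a b (by tauto) (by tauto) hab ha hb with rfl | rfl
    · rcases key b c (by tauto) (by tauto) hbc hb hc with rfl | rfl
      · exact hab rfl
      · exact hac rfl
    · rcases key a c (by tauto) (by tauto) hac ha hc with rfl | rfl
      · exact hab rfl
      · exact hbc rfl
  · obtain ⟨r, hr, ⟨e⟩⟩ := h
    have hea := path_endpoint e ha (hcl a (by tauto))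
    have heb := path_endpoint e hb (hcl b (by tauto))
    have hec := path_endpoint e hc (hcl c (by tauto))
    have hne : ∀ (x y : V) (hx : x ∈ S) (hy : y ∈ S), x ≠ y →
        (e ⟨x, hx⟩).val ≠ (e ⟨y, hy⟩).val := by
      intro x y hx hy hxy hval
      exact hxy (congrArg Subtype.val (induce_iso_inj e (Fin.ext hval)))
    have h1 := hne a b ha hb hab
    have h2 := hne a c ha hc hac
    have h3 := hne b c hb hc hbc
    omega

/-- Existence of a trivial SP cover (all singletons). -/
lemma sp_cover_nonempty [Fintype V] [DecidableEq V] (G : SimpleGraph V) :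
    {k | ∃ P : Finset (Set V), P.card = k ∧
      IsCoverBy P (fun S => IsInducedStarSet G S ∨ IsInducedPathSet G S)}.Nonempty := by
  classical
  refine ⟨(Finset.univ.image (fun v => ({v} : Set V))).card,
    Finset.univ.image (fun v => ({v} : Set V)), rfl, fun T hT => ?_, fun v => ?_⟩
  · simp only [Finset.mem_image] at hT
    obtain ⟨v, -, rfl⟩ := hT
    right
    refine ⟨1, le_refl 1, ⟨⟨Equiv.ofUnique _ _, fun {x y} => ?_⟩⟩⟩
    have : x = y := Subsingleton.elim x y
    subst this
    exact iff_of_false (SimpleGraph.irrefl _) (SimpleGraph.irrefl _)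
  · exact ⟨{v}, Finset.mem_image_of_mem _ (Finset.mem_univ v), rfl⟩

end Generic
section Generic2

variable {V : Type*} {G : SimpleGraph V} {S : Set V}

lemma path_has_nbr {r : ℕ} (e : G.induce S ≃g pathGraph r) {a b : V}
    (ha : a ∈ S) (hb : b ∈ S) (hab : a ≠ b) : ∃ c ∈ S, G.Adj a c := by
  have hr : 2 ≤ r := by
    have h2 := (e ⟨a, ha⟩).isLt
    have hne : (e ⟨a, ha⟩).val ≠ (e ⟨b, hb⟩).val := by
      intro hval
      exact hab (congrArg Subtype.val (induce_iso_inj e (Fin.ext hval)))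
    have := (e ⟨b, hb⟩).isLt
    omega
  set v := (e ⟨a, ha⟩).val with hv
  have hlt := (e ⟨a, ha⟩).isLt
  by_cases hcase : v + 1 < r
  · refine ⟨e.symm ⟨v + 1, hcase⟩, (e.symm ⟨v + 1, hcase⟩).2, ?_⟩
    rw [induce_iso_adj e ⟨a, ha⟩ (e.symm _), RelIso.apply_symm_apply, pathGraph_adj]
    left; rfl
  · refine ⟨e.symm ⟨v - 1, by omega⟩, (e.symm ⟨v - 1, by omega⟩).2, ?_⟩
    rw [induce_iso_adj e ⟨a, ha⟩ (e.symm _), RelIso.apply_symm_apply, pathGraph_adj]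
    right; simp; omega

/-- Claim A: a star-or-path set containing two distinct vertices `vs vt` whose
`G`-neighbourhoods are both exactly `{A, B}` is dominated by `A` or by `B`. -/
lemma sp_local (h : IsInducedStarSet G S ∨ IsInducedPathSet G S)
    {vs vt A B : V} (hAB : A ≠ B)
    (hs : vs ∈ S) (ht : vt ∈ S) (hst : vs ≠ vt)
    (hNs : ∀ y, G.Adj vs y ↔ (y = A ∨ y = B))
    (hNt : ∀ y, G.Adj vt y ↔ (y = A ∨ y = B)) :
    ∃ u, (u = A ∨ u = B) ∧ ∀ y, y ∈ S → y = u ∨ G.Adj u y := by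
  have hsA : vs ≠ A := fun hh => by
    have := (hNs A).mpr (Or.inl rfl); rw [hh] at this; exact G.irrefl this
  have hsB : vs ≠ B := fun hh => by
    have := (hNs B).mpr (Or.inr rfl); rw [hh] at this; exact G.irrefl this
  have htA : vt ≠ A := fun hh => by
    have := (hNt A).mpr (Or.inl rfl); rw [hh] at this; exact G.irrefl this
  have htB : vt ≠ B := fun hh => by
    have := (hNt B).mpr (Or.inr rfl); rw [hh] at this; exact G.irrefl this
  rcases h with h | h
  · -- star case
    obtain ⟨c₀, hc₀S, hdom⟩ := star_center h
    have hsc : vs = c₀ → False := by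
      rintro rfl
      rcases hdom vt ht with rfl | hadj
      · exact hst rfl
      · rcases (hNs vt).mp hadj with rfl | rfl
        · exact htA rfl
        · exact htB rfl
    rcases hdom vs hs with rfl | hadj
    · exact absurd rfl hsc
    · have hm : c₀ = A ∨ c₀ = B := (hNs c₀).mp hadj.symm
      exact ⟨c₀, hm, hdom⟩
  · -- path case
    obtain ⟨r, hr, ⟨e⟩⟩ := h
    have hboth : A ∈ S → B ∈ S → False := by
      intro hA hB
      have h1 : (pathGraph r).Adj (e ⟨vs, hs⟩) (e ⟨A, hA⟩) :=
        (induce_iso_adj e _ _).mp ((hNs A).mpr (Or.inl rfl))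
      have h2 : (pathGraph r).Adj (e ⟨vs, hs⟩) (e ⟨B, hB⟩) :=
        (induce_iso_adj e _ _).mp ((hNs B).mpr (Or.inr rfl))
      have h3 : (pathGraph r).Adj (e ⟨vt, ht⟩) (e ⟨A, hA⟩) :=
        (induce_iso_adj e _ _).mp ((hNt A).mpr (Or.inl rfl))
      have h4 : (pathGraph r).Adj (e ⟨vt, ht⟩) (e ⟨B, hB⟩) :=
        (induce_iso_adj e _ _).mp ((hNt B).mpr (Or.inr rfl))
      rw [pathGraph_adj] at h1 h2 h3 h4
      have h5 : (e ⟨vs, hs⟩).val ≠ (e ⟨vt, ht⟩).val := fun hval =>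
        hst (congrArg Subtype.val (induce_iso_inj e (Fin.ext hval)))
      have h6 : (e ⟨A, hA⟩).val ≠ (e ⟨B, hB⟩).val := fun hval =>
        hAB (congrArg Subtype.val (induce_iso_inj e (Fin.ext hval)))
      omega
    obtain ⟨c, hcS, hadj⟩ := path_has_nbr e hs ht hst
    obtain ⟨c', hc'S, hadj'⟩ := path_has_nbr e ht hs (Ne.symm hst)
    have hcAB := (hNs c).mp hadj
    have hc'AB := (hNt c').mp hadj'
    have hcc' : c = c' := by
      by_contra hne
      rcases hcAB with rfl | rfl <;> rcases hc'AB with rfl | rfl <;> first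
        | exact hne rfl
        | exact hboth hcS hc'S
        | exact hboth hc'S hcS
    subst hcc'
    -- u := c dominates S
    have hadjt : G.Adj vt c := (hNt c).mpr hcAB
    have hus : (pathGraph r).Adj (e ⟨c, hcS⟩) (e ⟨vs, hs⟩) :=
      (induce_iso_adj e _ _).mp hadj.symm
    have hut : (pathGraph r).Adj (e ⟨c, hcS⟩) (e ⟨vt, ht⟩) :=
      (induce_iso_adj e _ _).mp hadjt.symm
    rw [pathGraph_adj] at hus hut
    have h5 : (e ⟨vs, hs⟩).val ≠ (e ⟨vt, ht⟩).val := fun hval =>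
      hst (congrArg Subtype.val (induce_iso_inj e (Fin.ext hval)))
    have hu1 : 1 ≤ (e ⟨c, hcS⟩).val := by
      have := (e ⟨vs, hs⟩).isLt; have := (e ⟨vt, ht⟩).isLt; omega
    have hu2 : (e ⟨c, hcS⟩).val + 1 < r := by
      have := (e ⟨vs, hs⟩).isLt; have := (e ⟨vt, ht⟩).isLt; omega
    by_cases hr4 : 4 ≤ r
    · exfalso
      set uv := (e ⟨c, hcS⟩).val with huv
      have hz : ∃ zv : ℕ, zv < r ∧ zv ≠ uv ∧ (zv + 1 = (e ⟨vs, hs⟩).val ∨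
          (e ⟨vs, hs⟩).val + 1 = zv ∨ zv + 1 = (e ⟨vt, ht⟩).val ∨
          (e ⟨vt, ht⟩).val + 1 = zv) := by
        by_cases hc2 : uv + 2 < r
        · exact ⟨uv + 2, by omega, by omega, by omega⟩
        · exact ⟨uv - 2, by omega, by omega, by omega⟩
      obtain ⟨zv, hzlt, hz1', hz2'⟩ := hz
      set z : Fin r := ⟨zv, hzlt⟩ with hzdef
      have hzval : z.val = zv := rfl
      have hz1 : z.val ≠ uv := by omega
      have hz2 : z.val + 1 = (e ⟨vs, hs⟩).val ∨ (e ⟨vs, hs⟩).val + 1 = z.val ∨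
          z.val + 1 = (e ⟨vt, ht⟩).val ∨ (e ⟨vt, ht⟩).val + 1 = z.val := by omega
      have hwS := (e.symm z).2
      have hwadj : G.Adj vs (e.symm z) ∨ G.Adj vt (e.symm z) := by
        rcases hz2 with h' | h' | h' | h'
        · left
          rw [induce_iso_adj e ⟨vs, hs⟩ (e.symm z), RelIso.apply_symm_apply, pathGraph_adj]
          omega
        · left
          rw [induce_iso_adj e ⟨vs, hs⟩ (e.symm z), RelIso.apply_symm_apply, pathGraph_adj]
          omega
        · right
          rw [induce_iso_adj e ⟨vt, ht⟩ (e.symm z), RelIso.apply_symm_apply, pathGraph_adj]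
          omega
        · right
          rw [induce_iso_adj e ⟨vt, ht⟩ (e.symm z), RelIso.apply_symm_apply, pathGraph_adj]
          omega
      have hwAB : ((e.symm z : S) : V) = A ∨ ((e.symm z : S) : V) = B := by
        rcases hwadj with h' | h'
        · exact (hNs _).mp h'
        · exact (hNt _).mp h'
      have hwc : ((e.symm z : S) : V) ≠ c := by
        intro hh
        have : e.symm z = ⟨c, hcS⟩ := Subtype.ext hh
        have := congrArg e this
        rw [RelIso.apply_symm_apply] at this
        exact hz1 (congrArg Fin.val this)
      rcases hcAB with rfl | rfl <;> rcases hwAB with hw | hw <;>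
        first
          | exact hwc hw
          | exact hboth (hw ▸ hwS) hcS
          | exact hboth hcS (hw ▸ hwS)
    · -- r = 3
      refine ⟨c, hcAB, fun y hy => ?_⟩
      by_cases hyc : (e ⟨y, hy⟩).val = (e ⟨c, hcS⟩).val
      · left
        exact congrArg Subtype.val (induce_iso_inj e (Fin.ext hyc))
      · right
        have : (pathGraph r).Adj (e ⟨c, hcS⟩) (e ⟨y, hy⟩) := by
          rw [pathGraph_adj]
          have := (e ⟨y, hy⟩).isLt
          omega
        exact (induce_iso_adj e ⟨c, hcS⟩ ⟨y, hy⟩).mpr this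

end Generic2
section Counting

variable {V : Type*}

lemma count_two {ι : Type*} [Fintype ι] {P : Finset (Set V)}
    (τ : ι → V)
    (hcov : ∀ k : ι, ∃ S ∈ P, τ k ∈ S)
    (hbd : ∀ S ∈ P, ∀ k l p : ι, k ≠ l → k ≠ p → l ≠ p →
      τ k ∈ S → τ l ∈ S → τ p ∈ S → False) :
    Fintype.card ι ≤ 2 * P.card := by
  classical
  choose g hgP hgm using hcov
  have himg : Finset.univ.image g ⊆ P := by
    intro T hT
    simp only [Finset.mem_image] at hT
    obtain ⟨k, -, rfl⟩ := hT
    exact hgP k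
  have h1 : (Finset.univ : Finset ι).card ≤ 2 * (Finset.univ.image g).card := by
    refine Finset.card_le_mul_card_image _ 2 (fun T hT => ?_)
    by_contra hlt
    push_neg at hlt
    obtain ⟨t, hts, ht3⟩ := Finset.exists_subset_card_eq hlt
    obtain ⟨k, l, p, hkl, hkp, hlp, rfl⟩ := Finset.card_eq_three.mp ht3
    have hk := hts (by simp : k ∈ ({k, l, p} : Finset ι))
    have hl := hts (by simp : l ∈ ({k, l, p} : Finset ι))
    have hp := hts (by simp : p ∈ ({k, l, p} : Finset ι))
    rw [Finset.mem_filter] at hk hl hp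
    exact hbd T (himg hT) k l p hkl hkp hlp (hk.2 ▸ hgm k) (hl.2 ▸ hgm l) (hp.2 ▸ hgm p)
  calc Fintype.card ι = (Finset.univ : Finset ι).card := (Finset.card_univ).symm
    _ ≤ 2 * (Finset.univ.image g).card := h1
    _ ≤ 2 * P.card := Nat.mul_le_mul_left 2 (Finset.card_le_card himg)

end Counting
section H1sec

variable {m n : ℕ}

lemma H1_w_adj (k : Fin (m-1)) (b) :
    (H1 m n).Adj (Sum.inr (Sum.inr k)) b ↔ b = Sum.inr (Sum.inl k) := by
  rw [H1, SimpleGraph.fromRel_adj]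
  constructor
  · rintro ⟨hne, h | h⟩ <;>
      rcases h with ⟨i, j, j', h1, h2, h3⟩ | ⟨i, h2, h3⟩ | ⟨i, p, q, h1, h2, h3, h4⟩ |
        ⟨i, p, q, h1, h2, h3, h4⟩ <;> simp_all
  · rintro rfl
    exact ⟨by simp, Or.inr (Or.inr (Or.inl ⟨k, rfl, rfl⟩))⟩

lemma H1_u00_adj (hm : 2 ≤ m) (hn : 3 ≤ n) (b) :
    (H1 m n).Adj (Sum.inl (⟨0, by omega⟩, ⟨0, by omega⟩)) b ↔
      b = Sum.inl (⟨0, by omega⟩, ⟨1, by omega⟩) := by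
  rw [H1, SimpleGraph.fromRel_adj]
  constructor
  · rintro ⟨hne, h | h⟩ <;>
      rcases h with ⟨i, j, j', h1, h2, h3⟩ | ⟨i, h2, h3⟩ | ⟨i, p, q, h1, h2, h3, h4⟩ |
        ⟨i, p, q, h1, h2, h3, h4⟩ <;> simp_all [Prod.ext_iff, Fin.ext_iff] <;> omega
  · rintro rfl
    refine ⟨by simp [Prod.ext_iff, Fin.ext_iff], Or.inl (Or.inl ⟨⟨0, by omega⟩, ⟨0, by omega⟩, ⟨1, by omega⟩, rfl, rfl, rfl⟩)⟩

lemma H1_ulast_adj (hm : 2 ≤ m) (hn : 3 ≤ n) (b) :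
    (H1 m n).Adj (Sum.inl (⟨m-1, by omega⟩, ⟨n-1, by omega⟩)) b ↔
      b = Sum.inl (⟨m-1, by omega⟩, ⟨n-2, by omega⟩) := by
  rw [H1, SimpleGraph.fromRel_adj]
  constructor
  · rintro ⟨hne, h | h⟩ <;>
      rcases h with ⟨i, j, j', h1, h2, h3⟩ | ⟨i, h2, h3⟩ | ⟨i, p, q, h1, h2, h3, h4⟩ |
        ⟨i, p, q, h1, h2, h3, h4⟩ <;> simp_all [Prod.ext_iff, Fin.ext_iff] <;>
      first
        | omega
        | (have := j'.isLt; omega)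
        | (have := i.isLt; omega)
  · rintro rfl
    refine ⟨by simp [Prod.ext_iff, Fin.ext_iff]; omega,
      Or.inr (Or.inl ⟨⟨m-1, by omega⟩, ⟨n-2, by omega⟩, ⟨n-1, by omega⟩, by simp; omega, rfl, rfl⟩)⟩

end H1sec
lemma H1_bound {m n : ℕ} (hm : 2 ≤ m) (hn : 3 ≤ n) : (m + 2) / 2 ≤ inspc (H1 m n) := by
  classical
  rw [inspc, coverNumber]
  refine le_csInf (sp_cover_nonempty _) ?_
  rintro b ⟨P, rfl, hpred, hcov⟩
  let τ : (Fin (m-1) ⊕ Fin 2) → ((Fin m × Fin n) ⊕ (Fin (m-1) ⊕ Fin (m-1))) :=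
    Sum.elim (fun k => Sum.inr (Sum.inr k))
      (fun j => if (j : ℕ) = 0 then Sum.inl (⟨0, by omega⟩, ⟨0, by omega⟩)
        else Sum.inl (⟨m-1, by omega⟩, ⟨n-1, by omega⟩))
  let ν : (Fin (m-1) ⊕ Fin 2) → ((Fin m × Fin n) ⊕ (Fin (m-1) ⊕ Fin (m-1))) :=
    Sum.elim (fun k => Sum.inr (Sum.inl k))
      (fun j => if (j : ℕ) = 0 then Sum.inl (⟨0, by omega⟩, ⟨1, by omega⟩)
        else Sum.inl (⟨m-1, by omega⟩, ⟨n-2, by omega⟩))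
  have hchar : ∀ k b, (H1 m n).Adj (τ k) b ↔ b = ν k := by
    rintro (k | j) b
    · exact H1_w_adj k b
    · by_cases hj : (j : ℕ) = 0
      · simp only [τ, ν, Sum.elim_inr, if_pos hj]
        exact H1_u00_adj hm hn b
      · simp only [τ, ν, Sum.elim_inr, if_neg hj]
        exact H1_ulast_adj hm hn b
  have hτinj : Function.Injective τ := by
    rintro (k | j) (l | j') h
    · simp only [τ, Sum.elim_inl, Sum.inr.injEq] at h
      rw [h]
    · simp only [τ, Sum.elim_inl, Sum.elim_inr] at h
      split_ifs at h <;> simp at h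
    · simp only [τ, Sum.elim_inl, Sum.elim_inr] at h
      split_ifs at h <;> simp at h
    · simp only [τ, Sum.elim_inr] at h
      split_ifs at h with h1 h2 h2 <;>
        first
          | (congr 1; exact Fin.ext (by omega))
          | (simp only [Sum.inl.injEq, Prod.mk.injEq, Fin.mk.injEq] at h; omega)
  have hνinj : Function.Injective ν := by
    rintro (k | j) (l | j') h
    · simp only [ν, Sum.elim_inl, Sum.inr.injEq, Sum.inl.injEq] at h
      rw [h]
    · simp only [ν, Sum.elim_inl, Sum.elim_inr] at h
      split_ifs at h <;> simp at h
    · simp only [ν, Sum.elim_inl, Sum.elim_inr] at h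
      split_ifs at h <;> simp at h
    · simp only [ν, Sum.elim_inr] at h
      split_ifs at h with h1 h2 h2 <;>
        first
          | (congr 1; exact Fin.ext (by omega))
          | (simp only [Sum.inl.injEq, Prod.mk.injEq, Fin.mk.injEq] at h; omega)
  have hτν : ∀ k l, ν k ≠ τ l := by
    rintro (k | j) (l | j') h
    · simp only [τ, ν, Sum.elim_inl, Sum.inr.injEq] at h
      simp at h
    · simp only [τ, ν, Sum.elim_inl, Sum.elim_inr] at h
      split_ifs at h <;> simp at h
    · simp only [τ, ν, Sum.elim_inl, Sum.elim_inr] at h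
      split_ifs at h <;> simp at h
    · simp only [τ, ν, Sum.elim_inr] at h
      split_ifs at h <;>
        (simp only [Sum.inl.injEq, Prod.mk.injEq, Fin.mk.injEq] at h; omega)
  have hbd : ∀ S ∈ P, ∀ k l p : Fin (m-1) ⊕ Fin 2, k ≠ l → k ≠ p → l ≠ p →
      τ k ∈ S → τ l ∈ S → τ p ∈ S → False := by
    intro S hS k l p hkl hkp hlp hk hl hp
    refine sp_two (hpred S hS) hk hl hp (fun h => hkl (hτinj h)) (fun h => hkp (hτinj h))
      (fun h => hlp (hτinj h)) ?_ ?_ ?_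
    · rintro x (rfl | rfl | rfl) y z hy hz hyz <;>
        exact absurd (((hchar _ y).mp hy).trans (((hchar _ z).mp hz).symm)) hyz
    · rintro x y (rfl | rfl | rfl) (rfl | rfl | rfl) h <;>
        exact hτν _ _ ((hchar _ _).mp h).symm
    · rintro x y u (rfl | rfl | rfl) (rfl | rfl | rfl) hxy hxu hyu <;>
        exact hxy (congrArg τ (hνinj (((hchar _ u).mp hxu).symm.trans ((hchar _ u).mp hyu))))
  have hcount := count_two τ (fun q => hcov (τ q)) hbd
  have hcard : Fintype.card (Fin (m-1) ⊕ Fin 2) = (m-1) + 2 := by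
    simp [Fintype.card_sum]
  omega
section H2sec

variable {m n : ℕ}

lemma H2_v_adj (hm : 2 ≤ m) (hn : 3 ≤ n) (k : Fin (m-1)) (b) :
    (H2 m n).Adj (Sum.inr k) b ↔
      (b = Sum.inl (⟨k.val, by have := k.isLt; omega⟩, ⟨n-1, by omega⟩) ∨
       b = Sum.inl (⟨k.val + 1, by have := k.isLt; omega⟩, ⟨0, by omega⟩)) := by
  rw [H2, SimpleGraph.fromRel_adj]
  constructor
  · rintro ⟨hne, h | h⟩ <;>
      rcases h with ⟨i, j, j', h1, h2, h3⟩ | ⟨i, p, q, h1, h2, h3, h4⟩ |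
        ⟨i, p, q, h1, h2, h3, h4⟩ | ⟨p, p', q, q', h1, h2, h3, h4, h5⟩ <;>
      simp_all [Prod.ext_iff, Fin.ext_iff] <;> omega
  · rintro (rfl | rfl)
    · exact ⟨by simp, Or.inl (Or.inr (Or.inl ⟨k, _, _, rfl, rfl, rfl, rfl⟩))⟩
    · exact ⟨by simp, Or.inl (Or.inr (Or.inr (Or.inl ⟨k, _, _, rfl, rfl, rfl, rfl⟩)))⟩

lemma H2_AB_adj (hm : 2 ≤ m) (hn : 3 ≤ n) (k : Fin (m-1)) :
    (H2 m n).Adj (Sum.inl (⟨k.val, by have := k.isLt; omega⟩, ⟨n-1, by omega⟩))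
      (Sum.inl (⟨k.val + 1, by have := k.isLt; omega⟩, ⟨0, by omega⟩)) := by
  rw [H2, SimpleGraph.fromRel_adj]
  refine ⟨by simp [Prod.ext_iff, Fin.ext_iff], Or.inl (Or.inr (Or.inr (Or.inr
    ⟨_, _, _, _, rfl, rfl, rfl, rfl, rfl⟩)))⟩

lemma H2_u00_adj (hm : 2 ≤ m) (hn : 3 ≤ n) (b) :
    (H2 m n).Adj (Sum.inl (⟨0, by omega⟩, ⟨0, by omega⟩)) b ↔
      b = Sum.inl (⟨0, by omega⟩, ⟨1, by omega⟩) := by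
  rw [H2, SimpleGraph.fromRel_adj]
  constructor
  · rintro ⟨hne, h | h⟩ <;>
      rcases h with ⟨i, j, j', h1, h2, h3⟩ | ⟨i, p, q, h1, h2, h3, h4⟩ |
        ⟨i, p, q, h1, h2, h3, h4⟩ | ⟨p, p', q, q', h1, h2, h3, h4, h5⟩ <;>
      simp_all [Prod.ext_iff, Fin.ext_iff] <;> omega
  · rintro rfl
    exact ⟨by simp [Prod.ext_iff, Fin.ext_iff], Or.inl (Or.inl ⟨⟨0, by omega⟩, ⟨0, by omega⟩, ⟨1, by omega⟩, rfl, rfl, rfl⟩)⟩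

lemma H2_ulast_adj (hm : 2 ≤ m) (hn : 3 ≤ n) (b) :
    (H2 m n).Adj (Sum.inl (⟨m-1, by omega⟩, ⟨n-1, by omega⟩)) b ↔
      b = Sum.inl (⟨m-1, by omega⟩, ⟨n-2, by omega⟩) := by
  rw [H2, SimpleGraph.fromRel_adj]
  constructor
  · rintro ⟨hne, h | h⟩ <;>
      rcases h with ⟨i, j, j', h1, h2, h3⟩ | ⟨i, p, q, h1, h2, h3, h4⟩ |
        ⟨i, p, q, h1, h2, h3, h4⟩ | ⟨p, p', q, q', h1, h2, h3, h4, h5⟩ <;>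
      simp_all [Prod.ext_iff, Fin.ext_iff] <;>
      first
        | omega
        | (have := j'.isLt; omega)
        | (have := i.isLt; omega)
        | (have := p'.isLt; omega)
  · rintro rfl
    refine ⟨by simp [Prod.ext_iff, Fin.ext_iff]; omega,
      Or.inr (Or.inl ⟨⟨m-1, by omega⟩, ⟨n-2, by omega⟩, ⟨n-1, by omega⟩, by simp; omega, rfl, rfl⟩)⟩

end H2sec
lemma H2_bound {m n : ℕ} (hm : 2 ≤ m) (hn : 3 ≤ n) : (m + 2) / 2 ≤ inspc (H2 m n) := by
  classical
  rw [inspc, coverNumber]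
  refine le_csInf (sp_cover_nonempty _) ?_
  rintro b ⟨P, rfl, hpred, hcov⟩
  let τ : (Fin (m-1) ⊕ Fin 2) → ((Fin m × Fin n) ⊕ Fin (m-1)) :=
    Sum.elim (fun k => Sum.inr k)
      (fun j => if (j : ℕ) = 0 then Sum.inl (⟨0, by omega⟩, ⟨0, by omega⟩)
        else Sum.inl (⟨m-1, by omega⟩, ⟨n-1, by omega⟩))
  let νA : (Fin (m-1) ⊕ Fin 2) → ((Fin m × Fin n) ⊕ Fin (m-1)) :=
    Sum.elim (fun k => Sum.inl (⟨k.val, by have := k.isLt; omega⟩, ⟨n-1, by omega⟩))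
      (fun j => if (j : ℕ) = 0 then Sum.inl (⟨0, by omega⟩, ⟨1, by omega⟩)
        else Sum.inl (⟨m-1, by omega⟩, ⟨n-2, by omega⟩))
  let νB : (Fin (m-1) ⊕ Fin 2) → ((Fin m × Fin n) ⊕ Fin (m-1)) :=
    Sum.elim (fun k => Sum.inl (⟨k.val + 1, by have := k.isLt; omega⟩, ⟨0, by omega⟩))
      (fun j => if (j : ℕ) = 0 then Sum.inl (⟨0, by omega⟩, ⟨1, by omega⟩)
        else Sum.inl (⟨m-1, by omega⟩, ⟨n-2, by omega⟩))
  have hchar : ∀ q b, (H2 m n).Adj (τ q) b ↔ (b = νA q ∨ b = νB q) := by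
    rintro (k | j) b
    · exact H2_v_adj hm hn k b
    · by_cases hj : (j : ℕ) = 0
      · simp only [τ, νA, νB, Sum.elim_inr, if_pos hj, or_self]
        exact H2_u00_adj hm hn b
      · simp only [τ, νA, νB, Sum.elim_inr, if_neg hj, or_self]
        exact H2_ulast_adj hm hn b
  have hclq : ∀ q, νA q ≠ νB q → (H2 m n).Adj (νA q) (νB q) := by
    rintro (k | j) hne
    · exact H2_AB_adj hm hn k
    · simp only [νA, νB, Sum.elim_inr] at hne
      split_ifs at hne <;> exact absurd rfl hne
  have hτinj : Function.Injective τ := by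
    rintro (k | j) (l | j') h
    · simp only [τ, Sum.elim_inl, Sum.inr.injEq] at h
      rw [h]
    · simp only [τ, Sum.elim_inl, Sum.elim_inr] at h
      split_ifs at h <;> simp at h
    · simp only [τ, Sum.elim_inl, Sum.elim_inr] at h
      split_ifs at h <;> simp at h
    · simp only [τ, Sum.elim_inr] at h
      split_ifs at h with h1 h2 h2 <;>
        first
          | (congr 1; exact Fin.ext (by omega))
          | (simp only [Sum.inl.injEq, Prod.mk.injEq, Fin.mk.injEq] at h; omega)
  have hτν : ∀ q q', νA q ≠ τ q' ∧ νB q ≠ τ q' := by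
    rintro (k | j) (l | j') <;> constructor <;> intro h <;>
      simp only [τ, νA, νB, Sum.elim_inl, Sum.elim_inr] at h <;>
      (try split_ifs at h) <;>
      (first
        | exact Sum.inl_ne_inr h
        | exact Sum.inr_ne_inl h
        | (simp only [Sum.inl.injEq, Prod.mk.injEq, Fin.mk.injEq] at h
           first
             | omega
             | (have := k.isLt; omega)))
  have hνdisj : ∀ q q', q ≠ q' → ∀ u, (u = νA q ∨ u = νB q) →
      (u = νA q' ∨ u = νB q') → False := by
    rintro (k | j) (l | j') hne u hu hu'
    · have hkl : k.val ≠ l.val := fun hh => hne (by rw [Fin.ext hh])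
      rcases hu with rfl | rfl <;> rcases hu' with h | h <;>
        simp only [νA, νB, Sum.elim_inl, Sum.inl.injEq, Prod.mk.injEq, Fin.mk.injEq] at h <;>
        omega
    · rcases hu with rfl | rfl <;> rcases hu' with h | h <;>
        simp only [νA, νB, Sum.elim_inl, Sum.elim_inr] at h <;>
        split_ifs at h <;>
        simp only [Sum.inl.injEq, Prod.mk.injEq, Fin.mk.injEq] at h <;>
        omega
    · rcases hu with rfl | rfl <;> rcases hu' with h | h <;>
        simp only [νA, νB, Sum.elim_inl, Sum.elim_inr] at h <;>
        split_ifs at h <;>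
        simp only [Sum.inl.injEq, Prod.mk.injEq, Fin.mk.injEq] at h <;>
        (have := l.isLt; omega)
    · have hjj : (j : ℕ) ≠ (j' : ℕ) := fun hh => hne (by rw [Fin.ext hh])
      rcases hu with rfl | rfl <;> rcases hu' with h | h <;>
        simp only [νA, νB, Sum.elim_inr] at h <;>
        split_ifs at h <;>
        first
          | omega
          | (simp only [Sum.inl.injEq, Prod.mk.injEq, Fin.mk.injEq] at h; omega)
  have hbd : ∀ S ∈ P, ∀ k l p : Fin (m-1) ⊕ Fin 2, k ≠ l → k ≠ p → l ≠ p →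
      τ k ∈ S → τ l ∈ S → τ p ∈ S → False := by
    intro S hS k l p hkl hkp hlp hk hl hp
    refine sp_two (hpred S hS) hk hl hp (fun h => hkl (hτinj h)) (fun h => hkp (hτinj h))
      (fun h => hlp (hτinj h)) ?_ ?_ ?_
    · rintro x (rfl | rfl | rfl) y z hy hz hyz <;>
      · rcases (hchar _ y).mp hy with rfl | rfl <;> rcases (hchar _ z).mp hz with rfl | rfl
        · exact absurd rfl hyz
        · exact hclq _ hyz
        · exact (hclq _ (Ne.symm hyz)).symm
        · exact absurd rfl hyz
    · rintro x y (rfl | rfl | rfl) (rfl | rfl | rfl) h <;>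
        rcases (hchar _ _).mp h with h' | h' <;>
        first
          | exact (hτν _ _).1 h'.symm
          | exact (hτν _ _).2 h'.symm
    · rintro x y u (rfl | rfl | rfl) (rfl | rfl | rfl) hxy hxu hyu <;>
        exact hνdisj _ _ (fun h => hxy (congrArg τ h)) u ((hchar _ u).mp hxu)
          ((hchar _ u).mp hyu)
  have hcount := count_two τ (fun q => hcov (τ q)) hbd
  have hcard : Fintype.card (Fin (m-1) ⊕ Fin 2) = (m-1) + 2 := by
    simp [Fintype.card_sum]
  omega
section H3sec

variable {m n : ℕ}

lemma H3_conn_adj (hm : 2 ≤ m) (hn : 3 ≤ n) (i : Fin (m-1)) (t : Fin m) (b) :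
    (H3 m n).Adj (Sum.inr (i, t)) b ↔
      (b = Sum.inl (⟨i.val, by have := i.isLt; omega⟩, ⟨n-1, by omega⟩) ∨
       b = Sum.inl (⟨i.val + 1, by have := i.isLt; omega⟩, ⟨0, by omega⟩)) := by
  rw [H3, SimpleGraph.fromRel_adj]
  constructor
  · rintro ⟨hne, h | h⟩ <;>
      rcases h with ⟨i', j, j', h1, h2, h3⟩ | ⟨i', t', p, q, h1, h2, h3, h4⟩ |
        ⟨i', t', p, q, h1, h2, h3, h4⟩ <;>
      simp_all [Prod.ext_iff, Fin.ext_iff] <;> omega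
  · rintro (rfl | rfl)
    · exact ⟨by simp, Or.inl (Or.inr (Or.inl ⟨i, t, _, _, rfl, rfl, rfl, rfl⟩))⟩
    · exact ⟨by simp, Or.inl (Or.inr (Or.inr ⟨i, t, _, _, rfl, rfl, rfl, rfl⟩))⟩

lemma H3_u00_adj (hm : 2 ≤ m) (hn : 3 ≤ n) (b) :
    (H3 m n).Adj (Sum.inl (⟨0, by omega⟩, ⟨0, by omega⟩)) b ↔
      b = Sum.inl (⟨0, by omega⟩, ⟨1, by omega⟩) := by
  rw [H3, SimpleGraph.fromRel_adj]
  constructor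
  · rintro ⟨hne, h | h⟩ <;>
      rcases h with ⟨i', j, j', h1, h2, h3⟩ | ⟨i', t', p, q, h1, h2, h3, h4⟩ |
        ⟨i', t', p, q, h1, h2, h3, h4⟩ <;>
      simp_all [Prod.ext_iff, Fin.ext_iff] <;> omega
  · rintro rfl
    exact ⟨by simp [Prod.ext_iff, Fin.ext_iff], Or.inl (Or.inl ⟨⟨0, by omega⟩, ⟨0, by omega⟩, ⟨1, by omega⟩, rfl, rfl, rfl⟩)⟩

lemma H3_bound (hm : 2 ≤ m) (hn : 3 ≤ n) : m ≤ inspc (H3 m n) := by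
  classical
  rw [inspc, coverNumber]
  refine le_csInf (sp_cover_nonempty _) ?_
  rintro b ⟨P, rfl, hpred, hcov⟩
  by_contra hk
  push_neg at hk
  set Af : Fin (m-1) → ((Fin m × Fin n) ⊕ (Fin (m-1) × Fin m)) :=
    fun i => Sum.inl (⟨i.val, by have := i.isLt; omega⟩, ⟨n-1, by omega⟩) with hAf
  set Bf : Fin (m-1) → ((Fin m × Fin n) ⊕ (Fin (m-1) × Fin m)) :=
    fun i => Sum.inl (⟨i.val + 1, by have := i.isLt; omega⟩, ⟨0, by omega⟩) with hBf
  have hAB : ∀ i, Af i ≠ Bf i := by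
    intro i h
    simp only [Af, Bf, Sum.inl.injEq, Prod.mk.injEq, Fin.mk.injEq] at h
    omega
  have hblock : ∀ i : Fin (m-1), ∃ S ∈ P, ∃ u,
      (u = Af i ∨ u = Bf i) ∧ (∀ y ∈ S, y = u ∨ (H3 m n).Adj u y) ∧
      ∃ t : Fin m, Sum.inr (i, t) ∈ S := by
    intro i
    choose g hgP hgm using (fun t : Fin m => hcov (Sum.inr (i, t)))
    have hlt : P.card < (Finset.univ : Finset (Fin m)).card := by
      simpa using hk
    obtain ⟨t, -, t', -, htt', heq⟩ :=
      Finset.exists_ne_map_eq_of_card_lt_of_maps_to hlt (fun t _ => hgP t)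
    have hne : (Sum.inr (i, t) : (Fin m × Fin n) ⊕ (Fin (m-1) × Fin m)) ≠ Sum.inr (i, t') := by
      simp [htt']
    obtain ⟨u, hu, hdom⟩ := sp_local (hpred _ (hgP t)) (hAB i) (hgm t) (heq ▸ hgm t') hne
      (H3_conn_adj hm hn i t) (H3_conn_adj hm hn i t')
    exact ⟨g t, hgP t, u, hu, hdom, t, hgm t⟩
  choose Sf hSfP uf hufAB hdom tf htf using hblock
  have hSinj : Function.Injective (fun i => (⟨Sf i, hSfP i⟩ : {x // x ∈ P})) := by
    intro i j hij
    have hSS : Sf i = Sf j := congrArg Subtype.val hij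
    by_contra hne
    have hval : i.val ≠ j.val := fun hh => hne (Fin.ext hh)
    have hmem : Sum.inr (j, tf j) ∈ Sf i := hSS ▸ htf j
    rcases hdom i _ hmem with heq | hadj
    · rcases hufAB i with h | h <;> rw [h] at heq <;> simp [Af, Bf] at heq
    · have h2 := (H3_conn_adj hm hn j (tf j) (uf i)).mp hadj.symm
      rcases hufAB i with h | h <;> rcases h2 with h2 | h2 <;> rw [h] at h2 <;>
        simp only [Af, Bf, Sum.inl.injEq, Prod.mk.injEq, Fin.mk.injEq] at h2 <;>
        omega
  have hle : m - 1 ≤ P.card := by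
    have := Fintype.card_le_of_injective _ hSinj
    simpa using this
  have hbij : Function.Bijective (fun i => (⟨Sf i, hSfP i⟩ : {x // x ∈ P})) := by
    refine (Fintype.bijective_iff_injective_and_card _).mpr ⟨hSinj, ?_⟩
    simp only [Fintype.card_coe, Fintype.card_fin]
    omega
  obtain ⟨S0, hS0P, hmem0⟩ := hcov (Sum.inl (⟨0, by omega⟩, ⟨0, by omega⟩))
  obtain ⟨i, hi⟩ := hbij.2 ⟨S0, hS0P⟩
  have hmem0' : (Sum.inl (⟨0, by omega⟩, ⟨0, by omega⟩) :
      (Fin m × Fin n) ⊕ (Fin (m-1) × Fin m)) ∈ Sf i := by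
    have hSS0 : Sf i = S0 := congrArg Subtype.val hi
    rw [hSS0]; exact hmem0
  rcases hdom i _ hmem0' with heq | hadj
  · rcases hufAB i with h | h <;> rw [h] at heq <;>
      simp only [Af, Bf, Sum.inl.injEq, Prod.mk.injEq, Fin.mk.injEq] at heq <;>
      omega
  · have h2 := (H3_u00_adj hm hn (uf i)).mp hadj.symm
    rcases hufAB i with h | h <;> rw [h] at h2 <;>
      simp only [Af, Bf, Sum.inl.injEq, Prod.mk.injEq, Fin.mk.injEq] at h2 <;>
      omega

end H3sec
theorem statement_18 (m n : ℕ) (hm : 2 ≤ m) (hn : 3 ≤ n) :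
    (m + 2) / 2 ≤ inspc (H1 m n) ∧
    (m + 2) / 2 ≤ inspc (H2 m n) ∧
    m ≤ inspc (H3 m n) := by
  exact ⟨H1_bound hm hn, H2_bound hm hn, H3_bound hm hn⟩
end

section
/- For all integers m ≥ 2 and n ≥ 3: inspp(H^(4)_{m,n}) ≥ m and inspp(H^(5)_{m,n}) ≥ m. -/
open SimpleGraph

lemma starGraph_conn (k : ℕ) : (_root_.starGraph k).Connected := by
  have hadj : ∀ i : Fin k, (_root_.starGraph k).Adj (Sum.inl ()) (Sum.inr i) := by
    intro i; simp [_root_.starGraph]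
  rw [connected_iff]
  refine ⟨fun a b => ?_, ⟨Sum.inl ()⟩⟩
  rcases a with a | a <;> rcases b with b | b
  · exact Reachable.refl _
  · exact (hadj b).reachable
  · exact (hadj a).reachable.symm
  · exact (hadj a).reachable.symm.trans (hadj b).reachable

lemma pathGraph_K22 (k : ℕ) (a b c d : Fin k) (hac : a ≠ c) (hbd : b ≠ d)
    (h1 : (pathGraph k).Adj a b) (h2 : (pathGraph k).Adj a d)
    (h3 : (pathGraph k).Adj c b) (h4 : (pathGraph k).Adj c d) : False := by
  rw [pathGraph_adj] at h1 h2 h3 h4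
  have hac' : (a : ℕ) ≠ (c : ℕ) := fun h => hac (Fin.ext h)
  have hbd' : (b : ℕ) ≠ (d : ℕ) := fun h => hbd (Fin.ext h)
  omega

lemma starGraph_K22 (k : ℕ) (a b c d : Unit ⊕ Fin k) (hac : a ≠ c) (hbd : b ≠ d)
    (h1 : (_root_.starGraph k).Adj a b) (h2 : (_root_.starGraph k).Adj a d)
    (h3 : (_root_.starGraph k).Adj c b) (h4 : (_root_.starGraph k).Adj c d) : False := by
  rcases a with a | a <;> rcases c with c | c <;>
    rcases b with b | b <;> rcases d with d | d <;> simp_all [_root_.starGraph]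



-- connectivity of a part
lemma part_conn {V : Type*} (G : SimpleGraph V) (S : Set V)
    (h : IsInducedStarSet G S ∨ IsInducedPathSet G S) :
    (G.induce S).Connected := by
  rcases h with ⟨k, hk, ⟨e⟩⟩ | ⟨k, hk, ⟨e⟩⟩
  · exact e.connected_iff.mpr (starGraph_conn k)
  · obtain ⟨k, rfl⟩ : ∃ k', k = k' + 1 := ⟨k - 1, by omega⟩
    exact e.connected_iff.mpr (pathGraph_connected k)

-- min-degree: two distinct vertices in a part → each has a neighbour inside
lemma part_mindeg {V : Type*} (G : SimpleGraph V) (S : Set V)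
    (h : IsInducedStarSet G S ∨ IsInducedPathSet G S)
    {x y : V} (hx : x ∈ S) (hy : y ∈ S) (hxy : x ≠ y) :
    ∃ z ∈ S, G.Adj x z := by
  have hr := (part_conn G S h).preconnected ⟨x, hx⟩ ⟨y, hy⟩
  obtain ⟨w⟩ := hr
  cases w with
  | nil => exact absurd rfl hxy
  | cons hadj p =>
    rename_i b
    exact ⟨b.1, b.2, by simpa using hadj⟩

lemma part_K22 {V : Type*} (G : SimpleGraph V) (S : Set V)
    (h : IsInducedStarSet G S ∨ IsInducedPathSet G S)
    {a b c d : V} (ha : a ∈ S) (hb : b ∈ S) (hc : c ∈ S) (hd : d ∈ S)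
    (hac : a ≠ c) (hbd : b ≠ d)
    (h1 : G.Adj a b) (h2 : G.Adj a d) (h3 : G.Adj c b) (h4 : G.Adj c d) : False := by
  have key : ∀ {W : Type} (K : SimpleGraph W),
      (∀ a b c d : W, a ≠ c → b ≠ d → K.Adj a b → K.Adj a d → K.Adj c b → K.Adj c d → False) →
      (G.induce S ≃g K) → False := by
    intro W K hK e
    have trans : ∀ (u v : V) (hu : u ∈ S) (hv : v ∈ S), G.Adj u v →
        K.Adj (e ⟨u, hu⟩) (e ⟨v, hv⟩) := by
      intro u v hu hv huv
      exact e.map_adj_iff.mpr (by simpa using huv)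
    have inj : ∀ (u v : V) (hu : u ∈ S) (hv : v ∈ S), u ≠ v →
        e ⟨u, hu⟩ ≠ e ⟨v, hv⟩ := by
      intro u v hu hv huv hEq
      exact huv (congrArg Subtype.val (e.toEquiv.injective hEq))
    exact hK _ _ _ _ (inj a c ha hc hac) (inj b d hb hd hbd)
      (trans a b ha hb h1) (trans a d ha hd h2) (trans c b hc hb h3) (trans c d hc hd h4)
  rcases h with ⟨k, hk, ⟨e⟩⟩ | ⟨k, hk, ⟨e⟩⟩
  · exact key (_root_.starGraph k) (starGraph_K22 k) e
  · exact key (pathGraph k) (pathGraph_K22 k) e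

abbrev Vt (m n : ℕ) := (Fin m × Fin n) ⊕ (Fin (m - 1) × Fin 2)

def lft {m n : ℕ} (c : ℕ) : Vt m n → Prop :=
  Sum.elim (fun p => (p.1 : ℕ) ≤ c) (fun p => (p.1 : ℕ) < c)

theorem generic_bound (m n : ℕ) (hm : 2 ≤ m) (hn : 3 ≤ n) (G : SimpleGraph (Vt m n))
    (hCut : ∀ (c : Fin (m-1)) (x y : Vt m n), G.Adj x y → lft (c:ℕ) x → ¬ lft (c:ℕ) y →
       x = Sum.inl (⟨(c:ℕ), by have := c.isLt; omega⟩, ⟨n-1, by omega⟩) ∧ ∃ t, y = Sum.inr (c, t))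
    (hNbr : ∀ (c : Fin (m-1)) (t : Fin 2) (x : Vt m n), G.Adj (Sum.inr (c,t)) x →
       x = Sum.inl (⟨(c:ℕ), by have := c.isLt; omega⟩, ⟨n-1, by omega⟩) ∨
       x = Sum.inl (⟨(c:ℕ)+1, by have := c.isLt; omega⟩, ⟨0, by omega⟩) ∨
       x = Sum.inr (c, ⟨1-(t:ℕ), by omega⟩))
    (hAdj1 : ∀ (c : Fin (m-1)) (t : Fin 2),
       G.Adj (Sum.inl (⟨(c:ℕ), by have := c.isLt; omega⟩, ⟨n-1, by omega⟩)) (Sum.inr (c,t)))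
    (hAdj2 : ∀ (c : Fin (m-1)) (t : Fin 2),
       G.Adj (Sum.inl (⟨(c:ℕ)+1, by have := c.isLt; omega⟩, ⟨0, by omega⟩)) (Sum.inr (c,t)))
    (P : Finset (Set (Vt m n)))
    (hP : IsPartitionBy P (fun S => IsInducedStarSet G S ∨ IsInducedPathSet G S)) :
    m ≤ P.card := by
  classical
  obtain ⟨⟨hpred, hcov⟩, hdis⟩ := hP
  have hpt : ∀ v : Vt m n, ∃ S, S ∈ P ∧ v ∈ S := by
    intro v; obtain ⟨S, hS, hv⟩ := hcov v; exact ⟨S, hS, hv⟩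
  choose pt hptP hptmem using hpt
  -- CUT lemma
  have CUT : ∀ S ∈ P, ∀ (c : Fin (m-1)) (x y : Vt m n), x ∈ S → y ∈ S →
      lft (c:ℕ) x → ¬ lft (c:ℕ) y →
      (Sum.inl (⟨(c:ℕ), by have := c.isLt; omega⟩, ⟨n-1, by omega⟩) : Vt m n) ∈ S ∧
        ∃ t, (Sum.inr (c, t) : Vt m n) ∈ S := by
    intro S hS c x y hx hy hlx hly
    have H : ∀ (a b : S) (w : (G.induce S).Walk a b), lft (c:ℕ) a.1 → ¬ lft (c:ℕ) b.1 →
        (Sum.inl (⟨(c:ℕ), by have := c.isLt; omega⟩, ⟨n-1, by omega⟩) : Vt m n) ∈ S ∧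
          ∃ t, (Sum.inr (c, t) : Vt m n) ∈ S := by
      intro a b w
      induction w with
      | nil => intro h1 h2; exact absurd h1 h2
      | cons hadj p ih =>
        rename_i a' b' c'
        intro h1 h2
        by_cases hb : lft (c:ℕ) b'.1
        · exact ih hb h2
        · have hadj' : G.Adj a'.1 b'.1 := by simpa using hadj
          obtain ⟨hx1, t, hy1⟩ := hCut c a'.1 b'.1 hadj' h1 hb
          exact ⟨hx1 ▸ a'.2, t, hy1 ▸ b'.2⟩
    obtain ⟨w⟩ := (part_conn G S (hpred S hS)).preconnected ⟨x, hx⟩ ⟨y, hy⟩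
    exact H ⟨x, hx⟩ ⟨y, hy⟩ w hlx hly
  -- the key spec
  have KEY : ∀ i : Fin m, ∃ S, S ∈ P ∧
      (((Sum.inl (i, ⟨0, by omega⟩) : Vt m n) ∈ S ∧
        ∀ c : Fin (m-1), (c:ℕ)+1 = (i:ℕ) →
          (Sum.inl (⟨(c:ℕ), by have := c.isLt; omega⟩, ⟨n-1, by omega⟩) : Vt m n) ∉ S) ∨
       (∃ c : Fin (m-1), (c:ℕ)+1 = (i:ℕ) ∧ ∃ t : Fin 2,
          (Sum.inr (c, t) : Vt m n) ∈ S ∧ ∀ z, G.Adj (Sum.inr (c,t)) z → z ∉ S)) := by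
    intro i
    by_cases hall : ∀ c : Fin (m-1), (c:ℕ)+1 = (i:ℕ) →
        (Sum.inl (⟨(c:ℕ), by have := c.isLt; omega⟩, ⟨n-1, by omega⟩) : Vt m n) ∉
          pt (Sum.inl (i, ⟨0, by omega⟩))
    · exact ⟨pt _, hptP _, Or.inl ⟨hptmem _, hall⟩⟩
    · push_neg at hall
      obtain ⟨c, hci, hcmem⟩ := hall
      have hxeq : (Sum.inl (⟨(c:ℕ)+1, by have := c.isLt; omega⟩, ⟨0, by omega⟩) : Vt m n)
          = Sum.inl (i, ⟨0, by omega⟩) :=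
        congrArg _ (Prod.ext (Fin.ext hci) rfl)
      have hcut := CUT (pt (Sum.inl (i, ⟨0, by omega⟩))) (hptP _) c _ _ hcmem (hptmem _)
        (by simp [lft]) (by simp [lft]; omega)
      obtain ⟨-, t, htmem⟩ := hcut
      have hA2 : ∀ s : Fin 2, G.Adj (Sum.inl (i, ⟨0, by omega⟩)) (Sum.inr (c, s)) := by
        intro s; rw [← hxeq]; exact hAdj2 c s
      have ht'notS : (Sum.inr (c, ⟨1-(t:ℕ), by omega⟩) : Vt m n) ∉
          pt (Sum.inl (i, ⟨0, by omega⟩)) := by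
        intro hmem
        refine part_K22 G _ (hpred _ (hptP _)) hcmem htmem (hptmem _) hmem
          ?_ ?_ (hAdj1 c t) (hAdj1 c _) (hA2 t) (hA2 _)
        · intro hEq
          have h2 : (⟨n-1, by omega⟩ : Fin n) = ⟨0, by omega⟩ :=
            (Prod.ext_iff.mp (Sum.inl.inj hEq)).2
          have h3 := Fin.ext_iff.mp h2
          simp at h3; omega
        · intro hEq
          have h2 : t = ⟨1-(t:ℕ), by omega⟩ := (Prod.ext_iff.mp (Sum.inr.inj hEq)).2
          have h3 := Fin.ext_iff.mp h2
          simp at h3; omega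
      have hTS : pt (Sum.inr (c, ⟨1-(t:ℕ), by omega⟩)) ≠ pt (Sum.inl (i, ⟨0, by omega⟩)) := by
        intro hEq
        exact ht'notS (hEq ▸ hptmem (Sum.inr (c, ⟨1-(t:ℕ), by omega⟩)))
      refine ⟨pt (Sum.inr (c, ⟨1-(t:ℕ), by omega⟩)), hptP _,
        Or.inr ⟨c, hci, ⟨1-(t:ℕ), by omega⟩, hptmem _, ?_⟩⟩
      intro z hz hzT
      have hzS : z ∈ pt (Sum.inl (i, ⟨0, by omega⟩)) := by
        rcases hNbr c _ z hz with h | h | h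
        · exact h ▸ hcmem
        · rw [h, ← hxeq]
          exact hxeq ▸ hptmem (Sum.inl (i, ⟨0, by omega⟩))
        · have ht2 : (⟨1-((⟨1-(t:ℕ), by omega⟩ : Fin 2) : ℕ), by omega⟩ : Fin 2) = t := by
            apply Fin.ext; simp; omega
          rw [h, ht2]; exact htmem
      exact hdis _ (hptP _) _ (hptP _) hTS z hzT hzS
  choose ψ hψP hψspec using KEY
  have hLL : ∀ i j : Fin m, (i:ℕ) < (j:ℕ) → ψ i = ψ j →
      (Sum.inl (i, ⟨0, by omega⟩) : Vt m n) ∈ ψ i →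
      (Sum.inl (j, ⟨0, by omega⟩) : Vt m n) ∈ ψ j →
      (∀ c : Fin (m-1), (c:ℕ)+1 = (j:ℕ) →
        (Sum.inl (⟨(c:ℕ), by have := c.isLt; omega⟩, ⟨n-1, by omega⟩) : Vt m n) ∉ ψ j) →
      False := by
    intro i j hij hEq hxi hxj hnone
    have hjm : (j:ℕ) - 1 < m - 1 := by have := j.isLt; omega
    have hcut := CUT (ψ j) (hψP j) ⟨(j:ℕ)-1, hjm⟩ (Sum.inl (i, ⟨0, by omega⟩))
      (Sum.inl (j, ⟨0, by omega⟩))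
      (hEq ▸ hxi) hxj (by simp [lft]; omega) (by simp [lft]; omega)
    exact hnone ⟨(j:ℕ)-1, hjm⟩ (by simp; omega) hcut.1
  have hinj : ∀ i j : Fin m, ψ i = ψ j → i = j := by
    intro i j hEq
    by_contra hij
    have hij' : (i:ℕ) ≠ (j:ℕ) := fun h => hij (Fin.ext h)
    rcases hψspec i with ⟨hxi, hnone_i⟩ | ⟨ci, hci, ti, hti, hiso_i⟩ <;>
      rcases hψspec j with ⟨hxj, hnone_j⟩ | ⟨cj, hcj, tj, htj, hiso_j⟩
    · rcases Nat.lt_or_ge (i:ℕ) (j:ℕ) with h | h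
      · exact hLL i j h hEq hxi hxj hnone_j
      · exact hLL j i (by omega) hEq.symm hxj hxi hnone_i
    · obtain ⟨z, hzmem, hzadj⟩ := part_mindeg G (ψ j) (hpred _ (hψP j))
        htj (hEq ▸ hxi) (by simp)
      exact hiso_j z hzadj hzmem
    · obtain ⟨z, hzmem, hzadj⟩ := part_mindeg G (ψ i) (hpred _ (hψP i))
        hti (hEq.symm ▸ hxj) (by simp)
      exact hiso_i z hzadj hzmem
    · have hne : (Sum.inr (ci, ti) : Vt m n) ≠ Sum.inr (cj, tj) := by
        intro h
        have h2 : ci = cj := (Prod.ext_iff.mp (Sum.inr.inj h)).1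
        have h3 := Fin.ext_iff.mp h2
        omega
      obtain ⟨z, hzmem, hzadj⟩ := part_mindeg G (ψ i) (hpred _ (hψP i))
        hti (hEq.symm ▸ htj) hne
      exact hiso_i z hzadj hzmem
  have hfin : (Finset.univ : Finset (Fin m)).card ≤ P.card :=
    Finset.card_le_card_of_injOn ψ (fun i _ => hψP i) (fun i _ j _ h => hinj i j h)
  simpa using hfin

lemma inl_pair_eq {m n : ℕ} {p p' : Fin m} {q q' : Fin n} (h1 : p = p') (h2 : q = q') :
    (Sum.inl (p,q) : Vt m n) = Sum.inl (p',q') := by rw [h1, h2]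

lemma inr_pair_eq {m n : ℕ} {p p' : Fin (m-1)} {q q' : Fin 2} (h1 : p = p') (h2 : q = q') :
    (Sum.inr (p,q) : Vt m n) = Sum.inr (p',q') := by rw [h1, h2]


section H4lemmas
variable (m n : ℕ) (hm : 2 ≤ m) (hn : 3 ≤ n)

lemma H4_hAdj1 (c : Fin (m-1)) (t : Fin 2) :
    (H4 m n).Adj (Sum.inl (⟨(c:ℕ), by have := c.isLt; omega⟩, ⟨n-1, by omega⟩))
      (Sum.inr (c,t)) := by
  rw [H4, SimpleGraph.fromRel_adj]
  exact ⟨by simp, Or.inr (Or.inr (Or.inl ⟨c, t,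
    ⟨(c:ℕ), by have := c.isLt; omega⟩, ⟨n-1, by omega⟩, rfl, rfl, rfl, rfl⟩))⟩

lemma H4_hAdj2 (c : Fin (m-1)) (t : Fin 2) :
    (H4 m n).Adj (Sum.inl (⟨(c:ℕ)+1, by have := c.isLt; omega⟩, ⟨0, by omega⟩))
      (Sum.inr (c,t)) := by
  rw [H4, SimpleGraph.fromRel_adj]
  exact ⟨by simp, Or.inr (Or.inr (Or.inr ⟨c, t,
    ⟨(c:ℕ)+1, by have := c.isLt; omega⟩, ⟨0, by omega⟩, rfl, rfl, rfl, rfl⟩))⟩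

lemma H4_hNbr (c : Fin (m-1)) (t : Fin 2) (x : Vt m n)
    (h : (H4 m n).Adj (Sum.inr (c,t)) x) :
    x = Sum.inl (⟨(c:ℕ), by have := c.isLt; omega⟩, ⟨n-1, by omega⟩) ∨
    x = Sum.inl (⟨(c:ℕ)+1, by have := c.isLt; omega⟩, ⟨0, by omega⟩) ∨
    x = Sum.inr (c, ⟨1-(t:ℕ), by omega⟩) := by
  rw [H4, SimpleGraph.fromRel_adj] at h
  obtain ⟨hne, h⟩ := h
  rcases h with (⟨i,j,j',h1,h2,h3⟩|⟨i,t2,p,q,h1,h2,h3,h4⟩|⟨i,t2,p,q,h1,h2,h3,h4⟩) |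
    (⟨i,j,j',h1,h2,h3⟩|⟨i,t2,p,q,h1,h2,h3,h4⟩|⟨i,t2,p,q,h1,h2,h3,h4⟩)
  · simp at h2
  · simp only [Sum.inr.injEq, Prod.mk.injEq] at h3
    obtain ⟨rfl, rfl⟩ := h3
    subst h4
    exact Or.inl (inl_pair_eq (Fin.ext h1) (Fin.ext h2))
  · simp only [Sum.inr.injEq, Prod.mk.injEq] at h3
    obtain ⟨rfl, rfl⟩ := h3
    subst h4
    exact Or.inr (Or.inl (inl_pair_eq (Fin.ext h1) (Fin.ext h2)))
  · simp at h3
  · simp at h4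
  · simp at h4

lemma H4_hCut (c : Fin (m-1)) (x y : Vt m n) (h : (H4 m n).Adj x y)
    (hlx : lft (c:ℕ) x) (hly : ¬ lft (c:ℕ) y) :
    x = Sum.inl (⟨(c:ℕ), by have := c.isLt; omega⟩, ⟨n-1, by omega⟩) ∧
      ∃ t, y = Sum.inr (c, t) := by
  rw [H4, SimpleGraph.fromRel_adj] at h
  obtain ⟨hne, h⟩ := h
  rcases h with (⟨i,j,j',h1,rfl,rfl⟩|⟨i,t2,p,q,h1,h2,rfl,rfl⟩|⟨i,t2,p,q,h1,h2,rfl,rfl⟩) |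
    (⟨i,j,j',h1,rfl,rfl⟩|⟨i,t2,p,q,h1,h2,rfl,rfl⟩|⟨i,t2,p,q,h1,h2,rfl,rfl⟩) <;>
      simp [lft] at hlx hly
  · omega
  · omega
  · omega
  · omega
  · -- x = inl(p,q), y = inr(i,t2), ↑p = ↑i, ↑q = n-1
    have hic : (i:ℕ) = (c:ℕ) := by omega
    constructor
    · exact inl_pair_eq (Fin.ext (show (p:ℕ) = (c:ℕ) by omega)) (Fin.ext h2)
    · exact ⟨t2, inr_pair_eq (Fin.ext hic) rfl⟩
  · omega

end H4lemmas

section H5lemmas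
variable (m n : ℕ) (hm : 2 ≤ m) (hn : 3 ≤ n)

lemma H5_hAdj1 (c : Fin (m-1)) (t : Fin 2) :
    (H5 m n).Adj (Sum.inl (⟨(c:ℕ), by have := c.isLt; omega⟩, ⟨n-1, by omega⟩))
      (Sum.inr (c,t)) := by
  rw [H5, SimpleGraph.fromRel_adj]
  exact ⟨by simp, Or.inr (Or.inr (Or.inl ⟨c, t,
    ⟨(c:ℕ), by have := c.isLt; omega⟩, ⟨n-1, by omega⟩, rfl, rfl, rfl, rfl⟩))⟩

lemma H5_hAdj2 (c : Fin (m-1)) (t : Fin 2) :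
    (H5 m n).Adj (Sum.inl (⟨(c:ℕ)+1, by have := c.isLt; omega⟩, ⟨0, by omega⟩))
      (Sum.inr (c,t)) := by
  rw [H5, SimpleGraph.fromRel_adj]
  exact ⟨by simp, Or.inr (Or.inr (Or.inr (Or.inl ⟨c, t,
    ⟨(c:ℕ)+1, by have := c.isLt; omega⟩, ⟨0, by omega⟩, rfl, rfl, rfl, rfl⟩)))⟩

lemma H5_hNbr (c : Fin (m-1)) (t : Fin 2) (x : Vt m n)
    (h : (H5 m n).Adj (Sum.inr (c,t)) x) :
    x = Sum.inl (⟨(c:ℕ), by have := c.isLt; omega⟩, ⟨n-1, by omega⟩) ∨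
    x = Sum.inl (⟨(c:ℕ)+1, by have := c.isLt; omega⟩, ⟨0, by omega⟩) ∨
    x = Sum.inr (c, ⟨1-(t:ℕ), by omega⟩) := by
  rw [H5, SimpleGraph.fromRel_adj] at h
  obtain ⟨hne, h⟩ := h
  rcases h with (⟨i,j,j',h1,h2,h3⟩|⟨i,t2,p,q,h1,h2,h3,h4⟩|⟨i,t2,p,q,h1,h2,h3,h4⟩|⟨i,h2,h3⟩) |
    (⟨i,j,j',h1,h2,h3⟩|⟨i,t2,p,q,h1,h2,h3,h4⟩|⟨i,t2,p,q,h1,h2,h3,h4⟩|⟨i,h2,h3⟩)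
  · simp at h2
  · simp only [Sum.inr.injEq, Prod.mk.injEq] at h3
    obtain ⟨rfl, rfl⟩ := h3
    subst h4
    exact Or.inl (inl_pair_eq (Fin.ext h1) (Fin.ext h2))
  · simp only [Sum.inr.injEq, Prod.mk.injEq] at h3
    obtain ⟨rfl, rfl⟩ := h3
    subst h4
    exact Or.inr (Or.inl (inl_pair_eq (Fin.ext h1) (Fin.ext h2)))
  · -- inr(c,t) = inr(i,0), x = inr(i,1)
    simp only [Sum.inr.injEq, Prod.mk.injEq] at h2
    obtain ⟨rfl, rfl⟩ := h2
    subst h3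
    exact Or.inr (Or.inr (inr_pair_eq rfl (Fin.ext (by simp))))
  · simp at h3
  · simp at h4
  · simp at h4
  · -- x = inr(i,0), inr(c,t) = inr(i,1)
    simp only [Sum.inr.injEq, Prod.mk.injEq] at h3
    obtain ⟨rfl, rfl⟩ := h3
    subst h2
    exact Or.inr (Or.inr (inr_pair_eq rfl (Fin.ext (by simp))))

lemma H5_hCut (c : Fin (m-1)) (x y : Vt m n) (h : (H5 m n).Adj x y)
    (hlx : lft (c:ℕ) x) (hly : ¬ lft (c:ℕ) y) :
    x = Sum.inl (⟨(c:ℕ), by have := c.isLt; omega⟩, ⟨n-1, by omega⟩) ∧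
      ∃ t, y = Sum.inr (c, t) := by
  rw [H5, SimpleGraph.fromRel_adj] at h
  obtain ⟨hne, h⟩ := h
  rcases h with (⟨i,j,j',h1,rfl,rfl⟩|⟨i,t2,p,q,h1,h2,rfl,rfl⟩|⟨i,t2,p,q,h1,h2,rfl,rfl⟩|⟨i,rfl,rfl⟩) |
    (⟨i,j,j',h1,rfl,rfl⟩|⟨i,t2,p,q,h1,h2,rfl,rfl⟩|⟨i,t2,p,q,h1,h2,rfl,rfl⟩|⟨i,rfl,rfl⟩) <;>
      simp [lft] at hlx hly
  · omega
  · omega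
  · omega
  · omega
  · omega
  · have hic : (i:ℕ) = (c:ℕ) := by omega
    constructor
    · exact inl_pair_eq (Fin.ext (show (p:ℕ) = (c:ℕ) by omega)) (Fin.ext h2)
    · exact ⟨t2, inr_pair_eq (Fin.ext hic) rfl⟩
  · omega
  · omega

end H5lemmas

lemma singleton_pathset {V : Type*} (G : SimpleGraph V) (v : V) :
    IsInducedPathSet G {v} := by
  refine ⟨1, le_refl 1, ⟨⟨⟨fun _ => 0, fun _ => ⟨v, rfl⟩, ?_, ?_⟩, ?_⟩⟩⟩
  · intro a
    exact Subtype.ext ((show a.1 = v from a.2).symm)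
  · intro b
    exact Subsingleton.elim _ _
  · intro a b
    constructor
    · intro h
      rw [SimpleGraph.pathGraph_adj] at h
      omega
    · intro h
      have : a = b := Subsingleton.elim _ _
      exact absurd (this ▸ h) (SimpleGraph.irrefl _)

lemma exists_partition {V : Type*} [Fintype V] (G : SimpleGraph V) :
    ∃ P : Finset (Set V),
      IsPartitionBy P (fun S => IsInducedStarSet G S ∨ IsInducedPathSet G S) := by
  classical
  refine ⟨Finset.univ.image (fun v => ({v} : Set V)), ⟨?_, ?_⟩, ?_⟩
  · intro S hS
    simp only [Finset.mem_image] at hS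
    obtain ⟨v, -, rfl⟩ := hS
    exact Or.inr (singleton_pathset G v)
  · intro v
    exact ⟨{v}, by simp, rfl⟩
  · intro S hS T hT hne w hwS hwT
    simp only [Finset.mem_image] at hS hT
    obtain ⟨a, -, rfl⟩ := hS
    obtain ⟨b, -, rfl⟩ := hT
    have ha : w = a := hwS
    have hb : w = b := hwT
    exact hne (by rw [← ha, ← hb])


theorem statement_19 (m n : ℕ) (hm : 2 ≤ m) (hn : 3 ≤ n) :
    m ≤ inspp (H4 m n) ∧ m ≤ inspp (H5 m n) := by
  have key : ∀ G : SimpleGraph (Vt m n),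
      (∀ P : Finset (Set (Vt m n)),
        IsPartitionBy P (fun S => IsInducedStarSet G S ∨ IsInducedPathSet G S) →
          m ≤ P.card) →
      m ≤ inspp G := by
    intro G hbound
    apply le_csInf
    · obtain ⟨P, hP⟩ := exists_partition G
      exact ⟨P.card, P, rfl, hP⟩
    · rintro k ⟨P, rfl, hP⟩
      exact hbound P hP
  constructor
  · exact key _ (fun P hP => generic_bound m n hm hn (H4 m n)
      (H4_hCut m n hm hn) (H4_hNbr m n hm hn) (H4_hAdj1 m n hm hn) (H4_hAdj2 m n hm hn) P hP)
  · exact key _ (fun P hP => generic_bound m n hm hn (H5 m n)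
      (H5_hCut m n hm hn) (H5_hNbr m n hm hn) (H5_hAdj1 m n hm hn) (H5_hAdj2 m n hm hn) P hP)
end
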